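/- arXiv:2305.11260 — 2 statements merged into one kernel-verified Lean document; each statement's English description precedes it below -/
import Mathlib

section
/- Let (Ω, μ) be a probability space, let (E_t)_{t∈ℕ} be a sequence of measurable sets in Ω, let γ ∈ (0,1), δ ∈ (0,1], and T ∈ ℕ. Set ε := δ·(1 − γ^T·(1 − γ)). If the discounted constraint-satisfaction probabilities satisfy ∑_{t=0}^∞ γ^t · μ(E_t) ≥ (1 − δ + ε)/(1 − γ), then μ(⋂_{t=0}^T E_t) ≥ 1 − δ; that is, the solution is (1 − δ)-constrained up to horizon T. -/
open MeasureTheory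

/-- Theorem 5 (constraint guarantees): if the discounted constraint-satisfaction
probabilities are lower bounded by `(1 - δ + ε)/(1 - γ)` with
`ε = δ·(1 − γ^T·(1 − γ))`, then the solution is `(1 − δ)`-constrained up to
horizon `T`. -/
theorem stmt0 {Ω : Type*} [MeasurableSpace Ω] (μ : Measure Ω) [IsProbabilityMeasure μ]
    (E : ℕ → Set Ω) (hE : ∀ t, MeasurableSet (E t))
    (γ δ : ℝ) (hγ : γ ∈ Set.Ioo (0 : ℝ) 1) (hδ : δ ∈ Set.Ioc (0 : ℝ) 1) (T : ℕ)
    (ε : ℝ) (hε : ε = δ * (1 - γ ^ T * (1 - γ)))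
    (hsum : (∑' t : ℕ, γ ^ t * (μ (E t)).toReal) ≥ (1 - δ + ε) / (1 - γ)) :
    (μ (⋂ t ∈ Finset.range (T + 1), E t)).toReal ≥ 1 - δ := by
  obtain ⟨hγ0, hγ1⟩ := hγ
  obtain ⟨hδ0, hδ1⟩ := hδ
  have h1γ : (0:ℝ) < 1 - γ := by linarith
  set p : ℕ → ℝ := fun t => (μ (E t)).toReal with hp
  set q : ℕ → ℝ := fun t => (μ (E t)ᶜ).toReal with hq
  have hpq : ∀ t, q t = 1 - p t := by
    intro t
    simp only [hp, hq, prob_compl_eq_one_sub (hE t)]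
    rw [ENNReal.toReal_sub_of_le prob_le_one ENNReal.one_ne_top]
    simp
  have hp01 : ∀ t, 0 ≤ p t ∧ p t ≤ 1 := by
    intro t
    exact ⟨ENNReal.toReal_nonneg, by simpa using ENNReal.toReal_mono ENNReal.one_ne_top prob_le_one⟩
  have hq01 : ∀ t, 0 ≤ q t ∧ q t ≤ 1 := by
    intro t
    refine ⟨ENNReal.toReal_nonneg, ?_⟩
    rw [hpq t]; linarith [(hp01 t).1]
  -- summability facts
  have hsg : Summable (fun t : ℕ => γ ^ t) :=
    summable_geometric_of_lt_one (le_of_lt hγ0) hγ1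
  have hsp : Summable (fun t : ℕ => γ ^ t * p t) := by
    refine Summable.of_nonneg_of_le (fun t => ?_) (fun t => ?_) hsg
    · exact mul_nonneg (pow_nonneg hγ0.le t) (hp01 t).1
    · calc γ ^ t * p t ≤ γ ^ t * 1 :=
            mul_le_mul_of_nonneg_left (hp01 t).2 (pow_nonneg hγ0.le t)
        _ = γ ^ t := mul_one _
  have hsq : Summable (fun t : ℕ => γ ^ t * q t) := by
    refine Summable.of_nonneg_of_le (fun t => ?_) (fun t => ?_) hsg
    · exact mul_nonneg (pow_nonneg hγ0.le t) (hq01 t).1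
    · calc γ ^ t * q t ≤ γ ^ t * 1 :=
            mul_le_mul_of_nonneg_left (hq01 t).2 (pow_nonneg hγ0.le t)
        _ = γ ^ t := mul_one _
  have htg : (∑' t : ℕ, γ ^ t) = (1 - γ)⁻¹ :=
    tsum_geometric_of_lt_one (le_of_lt hγ0) hγ1
  have hsplit : (∑' t : ℕ, γ ^ t * q t)
      = (1 - γ)⁻¹ - (∑' t : ℕ, γ ^ t * p t) := by
    have : (fun t : ℕ => γ ^ t * q t) = fun t => γ ^ t - γ ^ t * p t := by
      funext t; rw [hpq t]; ring
    rw [this, Summable.tsum_sub hsg hsp, htg]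
  -- key bound on tsum of q
  have hkey : (∑' t : ℕ, γ ^ t * q t) ≤ δ * γ ^ T := by
    have hrhs : (1 - δ + ε) / (1 - γ) = (1 - γ)⁻¹ - δ * γ ^ T := by
      field_simp [hε]
      rw [hε]; ring
    rw [hsplit]
    have := hsum
    rw [hrhs] at this
    linarith
  -- finite sum bound
  have hfin : ∑ t ∈ Finset.range (T + 1), q t ≤ δ := by
    have h1 : γ ^ T * ∑ t ∈ Finset.range (T + 1), q t
        ≤ ∑ t ∈ Finset.range (T + 1), γ ^ t * q t := by
      rw [Finset.mul_sum]
      refine Finset.sum_le_sum (fun t ht => ?_)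
      have htT : t ≤ T := Nat.lt_succ_iff.mp (Finset.mem_range.mp ht)
      exact mul_le_mul_of_nonneg_right
        (pow_le_pow_of_le_one hγ0.le hγ1.le htT) (hq01 t).1
    have h2 : ∑ t ∈ Finset.range (T + 1), γ ^ t * q t
        ≤ ∑' t : ℕ, γ ^ t * q t := by
      refine Summable.sum_le_tsum _ (fun t _ => ?_) hsq
      exact mul_nonneg (pow_nonneg hγ0.le t) (hq01 t).1
    have hγT : (0:ℝ) < γ ^ T := pow_pos hγ0 T
    have : γ ^ T * ∑ t ∈ Finset.range (T + 1), q t ≤ δ * γ ^ T := by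
      linarith
    nlinarith
  -- union bound
  have hcompl : (⋂ t ∈ Finset.range (T + 1), E t)ᶜ
      = ⋃ t ∈ Finset.range (T + 1), (E t)ᶜ := by
    simp [Set.compl_iInter]
  have hunion : (μ (⋃ t ∈ Finset.range (T + 1), (E t)ᶜ)).toReal
      ≤ ∑ t ∈ Finset.range (T + 1), q t := by
    have h := measure_biUnion_finset_le (μ := μ) (Finset.range (T + 1))
      (fun t => (E t)ᶜ)
    have h2 : (μ (⋃ t ∈ Finset.range (T + 1), (E t)ᶜ)).toReal
        ≤ (∑ t ∈ Finset.range (T + 1), μ (E t)ᶜ).toReal := by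
      refine ENNReal.toReal_mono ?_ h
      refine (ENNReal.sum_lt_top.mpr (fun t _ => ?_)).ne
      exact measure_lt_top μ _
    rw [ENNReal.toReal_sum (fun t _ => (measure_lt_top μ _).ne)] at h2
    exact h2
  have hI : (μ (⋂ t ∈ Finset.range (T + 1), E t)).toReal
      = 1 - (μ (⋃ t ∈ Finset.range (T + 1), (E t)ᶜ)).toReal := by
    have hm : MeasurableSet (⋃ t ∈ Finset.range (T + 1), (E t)ᶜ) :=
      MeasurableSet.biUnion (Finset.range (T + 1)).countable_toSet
        (fun t _ => (hE t).compl)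
    have h := prob_compl_eq_one_sub (μ := μ) hm
    rw [← hcompl, compl_compl] at h
    rw [h, ENNReal.toReal_sub_of_le prob_le_one ENNReal.one_ne_top]
    simp
  rw [hI]
  linarith [le_trans hunion hfin]
end

section
/- Let γ : [0, T] → ℝ² be a K-Lipschitz curve (so that ‖γ(t) − γ(s)‖ ≤ K·|t − s|) and let r ≥ 0. Then the Lebesgue measure (area) of the closed r-neighborhood of the image of γ, i.e., of {x ∈ ℝ² : dist(x, γ([0,T])) ≤ r}, is at most 2·r·K·T + π·r². -/
open MeasureTheory Metric Set Filter
open scoped ENNReal Topology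

-- 1D: volume of {w | w^2 ≤ c}
lemma vol_sq_le (c : ℝ) : volume {w : ℝ | w ^ 2 ≤ c} = ENNReal.ofReal (2 * Real.sqrt c) := by
  rcases lt_or_ge c 0 with hc | hc
  · have : {w : ℝ | w ^ 2 ≤ c} = ∅ := by
      ext w; simp only [mem_setOf_eq, mem_empty_iff_false, iff_false]
      nlinarith [sq_nonneg w]
    rw [this, measure_empty, Real.sqrt_eq_zero_of_nonpos hc.le]
    simp
  · have : {w : ℝ | w ^ 2 ≤ c} = Icc (-Real.sqrt c) (Real.sqrt c) := by
      ext w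
      simp only [mem_setOf_eq, mem_Icc, ← abs_le]
      constructor
      · intro h
        have := Real.sqrt_le_sqrt h
        rwa [Real.sqrt_sq_eq_abs] at this
      · intro h
        have h2 : w ^ 2 ≤ (Real.sqrt c) ^ 2 := by
          rw [← sq_abs]
          exact pow_le_pow_left₀ (abs_nonneg w) h 2
        rwa [Real.sq_sqrt hc] at h2
    rw [this, Real.volume_Icc]
    ring_nf

noncomputable def gfun (R s : ℝ) : ℝ≥0∞ := ENNReal.ofReal (2 * Real.sqrt (R ^ 2 - s ^ 2))

lemma gfun_le (R : ℝ) (hR : 0 ≤ R) (s : ℝ) : gfun R s ≤ ENNReal.ofReal (2 * R) := by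
  apply ENNReal.ofReal_le_ofReal
  have : Real.sqrt (R ^ 2 - s ^ 2) ≤ R := by
    rcases le_total (R ^ 2 - s ^ 2) 0 with h | h
    · rw [Real.sqrt_eq_zero_of_nonpos h]; exact hR
    · calc Real.sqrt (R ^ 2 - s ^ 2) ≤ Real.sqrt (R ^ 2) := Real.sqrt_le_sqrt (by nlinarith)
        _ = R := Real.sqrt_sq hR
  linarith

lemma gfun_meas (R : ℝ) : Measurable (gfun R) := by
  unfold gfun
  exact ENNReal.measurable_ofReal.comp (by fun_prop)

lemma lintegral_gfun_ne_top (R : ℝ) (hR : 0 ≤ R) (s : Set ℝ) :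
    ∫⁻ t in s, gfun R t ∂volume ≠ ⊤ := by
  have hb : ∀ t, gfun R t ≤ (Icc (-R) R).indicator (fun _ => ENNReal.ofReal (2 * R)) t := by
    intro t
    rcases le_or_gt (t ^ 2) (R ^ 2) with h | h
    · have ht : t ∈ Icc (-R) R := by
        constructor <;> nlinarith
      rw [indicator_of_mem ht]
      exact gfun_le R hR t
    · have : Real.sqrt (R ^ 2 - t ^ 2) = 0 := Real.sqrt_eq_zero_of_nonpos (by linarith)
      unfold gfun
      rw [this]
      simp
  have : ∫⁻ t in s, gfun R t ∂volume ≤ ENNReal.ofReal (2 * R) * ENNReal.ofReal (2 * R) := by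
    calc ∫⁻ t in s, gfun R t ∂volume
        ≤ ∫⁻ t, gfun R t ∂volume := setLIntegral_le_lintegral _ _
      _ ≤ ∫⁻ t, (Icc (-R) R).indicator (fun _ => ENNReal.ofReal (2 * R)) t ∂volume :=
          lintegral_mono hb
      _ = ENNReal.ofReal (2 * R) * volume (Icc (-R) R) := by
          rw [lintegral_indicator measurableSet_Icc, setLIntegral_const]
      _ ≤ ENNReal.ofReal (2 * R) * ENNReal.ofReal (2 * R) := by
          gcongr
          rw [Real.volume_Icc]
          apply ENNReal.ofReal_le_ofReal; linarith
  exact (lt_of_le_of_lt this (by finiteness)).ne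

lemma lune2 (R d : ℝ) (hR : 0 ≤ R) (hd : 0 ≤ d) :
    volume {q : ℝ × ℝ | q.1 ^ 2 + q.2 ^ 2 ≤ R ^ 2 ∧ R ^ 2 < (q.1 - d) ^ 2 + q.2 ^ 2} ≤
      ENNReal.ofReal (2 * R * d) := by
  set A := {q : ℝ × ℝ | q.1 ^ 2 + q.2 ^ 2 ≤ R ^ 2 ∧ R ^ 2 < (q.1 - d) ^ 2 + q.2 ^ 2} with hAdef
  have hA : MeasurableSet A := by
    apply MeasurableSet.inter
    · exact measurableSet_le
        ((measurable_fst.pow_const 2).add (measurable_snd.pow_const 2)) measurable_const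
    · exact measurableSet_lt measurable_const
        (((measurable_fst.sub_const d).pow_const 2).add (measurable_snd.pow_const 2))
  have hslice : ∀ s : ℝ, Prod.mk s ⁻¹' A =
      {w : ℝ | w ^ 2 ≤ R ^ 2 - s ^ 2} \ {w : ℝ | w ^ 2 ≤ R ^ 2 - (s - d) ^ 2} := by
    intro s
    ext w
    simp only [hAdef, mem_preimage, mem_setOf_eq, mem_diff]
    constructor
    · rintro ⟨h1, h2⟩; exact ⟨by linarith, by push_neg; linarith⟩
    · rintro ⟨h1, h2⟩; push_neg at h2; exact ⟨by linarith, by linarith⟩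
  have hbound : ∀ s : ℝ, volume (Prod.mk s ⁻¹' A) ≤
      (Iic (d / 2)).indicator (fun s => gfun R s - gfun R (s - d)) s := by
    intro s
    rcases lt_or_ge (d / 2) s with h | h
    · have he : Prod.mk s ⁻¹' A = ∅ := by
        rw [hslice]
        ext w
        simp only [mem_diff, mem_setOf_eq, mem_empty_iff_false, iff_false, not_and, not_not]
        intro h1
        nlinarith
      rw [he]; simp
    · rw [indicator_of_mem (mem_Iic.mpr h), hslice]
      have hsub : {w : ℝ | w ^ 2 ≤ R ^ 2 - (s - d) ^ 2} ⊆ {w : ℝ | w ^ 2 ≤ R ^ 2 - s ^ 2} := by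
        intro w hw
        simp only [mem_setOf_eq] at *
        nlinarith
      rw [measure_diff hsub ((measurableSet_le (by fun_prop) measurable_const).nullMeasurableSet)
        (by rw [vol_sq_le]; exact ENNReal.ofReal_ne_top), vol_sq_le, vol_sq_le]
      exact le_refl _
  calc volume A = ∫⁻ s, volume (Prod.mk s ⁻¹' A) := by
        rw [← Measure.prod_apply hA, ← Measure.volume_eq_prod]
    _ ≤ ∫⁻ s, (Iic (d / 2)).indicator (fun s => gfun R s - gfun R (s - d)) s :=
        lintegral_mono hbound
    _ = ∫⁻ s in Iic (d / 2), (gfun R s - gfun R (s - d)) := lintegral_indicator measurableSet_Iic _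
    _ ≤ ENNReal.ofReal (2 * R * d) := by
      have hcov : ∫⁻ s in Iic (d / 2), gfun R (s - d) = ∫⁻ s in Iic (-(d / 2)), gfun R s := by
        have key : ∀ s : ℝ, (Iic (d / 2)).indicator (fun s => gfun R (s - d)) s
            = (Iic (-(d / 2))).indicator (gfun R) (s + -d) := by
          intro s
          have hm : (s + -d ∈ Iic (-(d / 2))) = (s ∈ Iic (d / 2)) := by
            simp only [mem_Iic, eq_iff_iff]
            constructor <;> intro <;> linarith
          simp only [indicator, hm, sub_eq_add_neg]
        rw [← lintegral_indicator measurableSet_Iic, ← lintegral_indicator measurableSet_Iic]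
        simp_rw [key]
        exact lintegral_add_right_eq_self ((Iic (-(d / 2))).indicator (gfun R)) (-d)
      have hle : (fun s => gfun R (s - d)) ≤ᵐ[volume.restrict (Iic (d / 2))] gfun R := by
        refine (ae_restrict_iff' measurableSet_Iic).2 (ae_of_all _ fun s hs => ?_)
        apply ENNReal.ofReal_le_ofReal
        have : R ^ 2 - (s - d) ^ 2 ≤ R ^ 2 - s ^ 2 := by
          rw [mem_Iic] at hs; nlinarith
        have := Real.sqrt_le_sqrt this
        linarith
      have hg2 : Measurable fun s : ℝ => gfun R (s - d) :=
        (gfun_meas R).comp (measurable_id.sub_const d)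
      have hfin : ∫⁻ s in Iic (d / 2), gfun R (s - d) ≠ ⊤ := by
        rw [hcov]; exact lintegral_gfun_ne_top R hR _
      rw [lintegral_sub hg2 hfin hle, hcov]
      have hsplit : ∫⁻ s in Iic (d / 2), gfun R s =
          (∫⁻ s in Iic (-(d / 2)), gfun R s) + ∫⁻ s in Ioc (-(d / 2)) (d / 2), gfun R s := by
        rw [← lintegral_union measurableSet_Ioc (Set.Iic_disjoint_Ioc le_rfl),
          Set.Iic_union_Ioc_eq_Iic (by linarith)]
      rw [hsplit, ENNReal.add_sub_cancel_left (lintegral_gfun_ne_top R hR _)]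
      calc ∫⁻ s in Ioc (-(d / 2)) (d / 2), gfun R s
          ≤ ∫⁻ _ in Ioc (-(d / 2)) (d / 2), ENNReal.ofReal (2 * R) :=
            setLIntegral_mono (by fun_prop) fun s _ => gfun_le R hR s
        _ = ENNReal.ofReal (2 * R) * volume (Ioc (-(d / 2)) (d / 2)) := setLIntegral_const _ _
        _ ≤ ENNReal.ofReal (2 * R * d) := by
            rw [Real.volume_Ioc, ← ENNReal.ofReal_mul (by linarith)]
            apply ENNReal.ofReal_le_ofReal
            nlinarith

lemma norm_sq_eq2 (v : EuclideanSpace ℝ (Fin 2)) : ‖v‖ ^ 2 = v 0 ^ 2 + v 1 ^ 2 := by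
  rw [EuclideanSpace.norm_eq, Real.sq_sqrt (by positivity)]
  simp [Fin.sum_univ_two, sq_abs]

lemma lune (x y : EuclideanSpace ℝ (Fin 2)) (R : ℝ) (hR : 0 ≤ R) :
    volume (closedBall x R \ closedBall y R) ≤ ENNReal.ofReal (2 * R * dist x y) := by
  rcases eq_or_ne y x with rfl | hne
  · simp
  set d := dist x y with hd
  have hd0 : 0 < d := dist_pos.mpr (Ne.symm hne)
  set u : EuclideanSpace ℝ (Fin 2) := d⁻¹ • (y - x) with hu_def
  have hyx_norm : ‖y - x‖ = d := by rw [hd, dist_eq_norm, norm_sub_rev]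
  have hu : ‖u‖ = 1 := by
    rw [hu_def, norm_smul, norm_inv, Real.norm_eq_abs, abs_of_pos hd0, hyx_norm]
    field_simp
  have horth : Orthonormal ℝ (({0} : Set (Fin 2)).restrict (fun _ : Fin 2 => u)) := by
    constructor
    · intro i; exact hu
    · intro i j hij
      exact absurd (Subtype.ext (by
        have hi := i.2; have hj := j.2
        simp only [mem_singleton_iff] at hi hj
        rw [hi, hj])) hij
  obtain ⟨b, hb⟩ := Orthonormal.exists_orthonormalBasis_extension_of_card_eq (𝕜 := ℝ)
    (by simp [finrank_euclideanSpace]) horth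
  have hb0 : b 0 = u := hb 0 rfl
  set Φ : EuclideanSpace ℝ (Fin 2) → ℝ × ℝ :=
    fun p => (b.repr (p - x) 0, b.repr (p - x) 1) with hΦ
  have hmp : MeasurePreserving Φ volume volume := by
    have h1 : MeasurePreserving (fun p : EuclideanSpace ℝ (Fin 2) => p - x) volume volume :=
      measurePreserving_sub_right volume x
    have h2 := b.measurePreserving_repr
    have h3 := EuclideanSpace.volume_preserving_symm_measurableEquiv_toLp (Fin 2)
    have h4 := volume_preserving_finTwoArrow ℝ
    exact (((h4.comp h3).comp h2).comp h1)
  set A := {q : ℝ × ℝ | q.1 ^ 2 + q.2 ^ 2 ≤ R ^ 2 ∧ R ^ 2 < (q.1 - d) ^ 2 + q.2 ^ 2} with hA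
  have hset : closedBall x R \ closedBall y R = Φ ⁻¹' A := by
    ext p
    have e1 : dist p x ^ 2 = b.repr (p - x) 0 ^ 2 + b.repr (p - x) 1 ^ 2 := by
      rw [dist_eq_norm, ← b.repr.norm_map (p - x), norm_sq_eq2]
    have hyx : y - x = d • u := by
      rw [hu_def, smul_smul, mul_inv_cancel₀ hd0.ne', one_smul]
    have hrepr : b.repr (p - y) = b.repr (p - x) - d • EuclideanSpace.single 0 1 := by
      have : p - y = (p - x) - (y - x) := by abel
      rw [this, map_sub, hyx, _root_.map_smul, ← hb0, b.repr_self]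
    have e2 : dist p y ^ 2 = (b.repr (p - x) 0 - d) ^ 2 + b.repr (p - x) 1 ^ 2 := by
      rw [dist_eq_norm, ← b.repr.norm_map (p - y), norm_sq_eq2, hrepr]
      simp [EuclideanSpace.single_apply]
    simp only [mem_diff, mem_closedBall, mem_preimage, hA, mem_setOf_eq, hΦ, not_le]
    rw [← pow_le_pow_iff_left₀ dist_nonneg hR two_ne_zero,
      ← pow_lt_pow_iff_left₀ hR dist_nonneg two_ne_zero, e1, e2]
  rw [hset, hmp.measure_preimage]
  · exact lune2 R d hR hd0.le
  · apply MeasurableSet.nullMeasurableSet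
    apply MeasurableSet.inter
    · exact measurableSet_le
        ((measurable_fst.pow_const 2).add (measurable_snd.pow_const 2)) measurable_const
    · exact measurableSet_lt measurable_const
        (((measurable_fst.sub_const d).pow_const 2).add (measurable_snd.pow_const 2))

lemma vol_cb2 (x : EuclideanSpace ℝ (Fin 2)) (ρ : ℝ) (hρ : 0 ≤ ρ) :
    volume (closedBall x ρ) = ENNReal.ofReal (Real.pi * ρ ^ 2) := by
  rw [EuclideanSpace.volume_closedBall]
  have hcard : Fintype.card (Fin 2) = 2 := by simp
  rw [hcard]
  have h1 : ((2 : ℕ) : ℝ) / 2 + 1 = 2 := by norm_num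
  rw [h1, Real.Gamma_two]
  have h2 : Real.sqrt Real.pi ^ 2 / 1 = Real.pi := by
    rw [div_one, Real.sq_sqrt Real.pi_nonneg]
  rw [h2, ← ENNReal.ofReal_pow hρ, ← ENNReal.ofReal_mul (by positivity)]
  ring_nf

lemma union_sub {X : Type*} (B : ℕ → Set X) (n : ℕ) :
    (⋃ i ∈ Finset.range (n + 1), B i) ⊆
      B 0 ∪ ⋃ i ∈ Finset.range n, (B (i + 1) \ B i) := by
  have main : ∀ j, j < n + 1 → B j ⊆ B 0 ∪ ⋃ i ∈ Finset.range n, (B (i + 1) \ B i) := by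
    intro j
    induction j with
    | zero => intro _; exact subset_union_left
    | succ k ih =>
      intro hk p hp
      by_cases hB : p ∈ B k
      · exact ih (Nat.lt_of_succ_lt hk) hB
      · right
        simp only [Finset.mem_range, mem_iUnion]
        exact ⟨k, Nat.lt_of_succ_lt_succ hk, hp, hB⟩
  intro p hp
  simp only [Finset.mem_range, mem_iUnion] at hp
  obtain ⟨j, hj, hpj⟩ := hp
  exact main j hj hpj

/-- The closed `r`-neighborhood of the image of a `K`-Lipschitz curve
`γ : [0,T] → ℝ²` has area at most `2·r·K·T + π·r²`. -/
theorem stmt8 (T : ℝ) (hT : 0 ≤ T) (K : ℝ) (hK : 0 ≤ K)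
    (f : ℝ → EuclideanSpace ℝ (Fin 2))
    (hf : ∀ s ∈ Set.Icc (0 : ℝ) T, ∀ t ∈ Set.Icc (0 : ℝ) T, ‖f t - f s‖ ≤ K * |t - s|)
    (r : ℝ) (hr : 0 ≤ r) :
    volume (Metric.cthickening r (f '' Set.Icc (0 : ℝ) T)) ≤
      ENNReal.ofReal (2 * r * K * T + Real.pi * r ^ 2) := by
  set S := f '' Set.Icc (0 : ℝ) T with hS
  have hcont : ContinuousOn f (Set.Icc 0 T) := by
    have hlip : LipschitzOnWith K.toNNReal f (Set.Icc 0 T) := by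
      apply LipschitzOnWith.of_dist_le_mul
      intro a ha b hb
      rw [dist_eq_norm, Real.dist_eq, Real.coe_toNNReal K hK]
      exact hf b hb a ha
    exact hlip.continuousOn
  have hcomp : IsCompact S := isCompact_Icc.image_of_continuousOn hcont
  -- the key estimate for each n ≥ 1
  have key : ∀ n : ℕ, 1 ≤ n → volume (Metric.cthickening r S) ≤
      ENNReal.ofReal (Real.pi * (r + K * T / n) ^ 2 + 2 * (r + K * T / n) * (K * T)) := by
    intro n hn
    obtain ⟨m, rfl⟩ : ∃ m, n = m + 1 := ⟨n - 1, (Nat.succ_pred_eq_of_pos hn).symm⟩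
    set n := m + 1 with hn_def
    have hn0 : (0 : ℝ) < n := by exact_mod_cast hn
    set h : ℝ := K * T / n with hh
    have hh0 : 0 ≤ h := by positivity
    have hhn : h * n = K * T := by rw [hh]; field_simp
    set ρ : ℝ := r + h with hρ
    have hρ0 : 0 ≤ ρ := by positivity
    set c : ℕ → EuclideanSpace ℝ (Fin 2) := fun i => f (i * T / n) with hc
    set B : ℕ → Set (EuclideanSpace ℝ (Fin 2)) := fun i => closedBall (c i) ρ with hB
    -- grid points are in [0, T]
    have hgrid : ∀ i : ℕ, i ≤ n → (i : ℝ) * T / n ∈ Set.Icc (0 : ℝ) T := by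
      intro i hi
      constructor
      · positivity
      · rw [div_le_iff₀ hn0]
        have : (i : ℝ) ≤ n := by exact_mod_cast hi
        nlinarith
    -- covering
    have hcover : Metric.cthickening r S ⊆ ⋃ i ∈ Finset.range n, B i := by
      rw [hcomp.cthickening_eq_biUnion_closedBall hr]
      apply Set.iUnion₂_subset
      rintro z ⟨t, ht, rfl⟩
      have hidx : ∃ i : ℕ, i < n ∧ |t - i * T / n| ≤ T / n := by
        rcases eq_or_lt_of_le hT with hT0 | hT0
        · refine ⟨0, hn, ?_⟩
          have ht0 : t = 0 := by
            rw [← hT0] at ht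
            exact le_antisymm ht.2 ht.1
          simp [ht0, ← hT0]
        · set x := t * n / T with hxdef
          have hx0 : 0 ≤ x := div_nonneg (mul_nonneg ht.1 hn0.le) hT0.le
          have hxn : x ≤ n := by
            rw [hxdef, div_le_iff₀ hT0]
            nlinarith [ht.2]
          by_cases hlt : x < n
          · refine ⟨⌊x⌋₊, ?_, ?_⟩
            · exact (Nat.floor_lt hx0).2 hlt
            · have h1 : (⌊x⌋₊ : ℝ) ≤ x := Nat.floor_le hx0
              have h2 : x < ⌊x⌋₊ + 1 := Nat.lt_floor_add_one x
              have hb1 : (⌊x⌋₊ : ℝ) * T ≤ t * n := (le_div_iff₀ hT0).1 (by rwa [hxdef] at h1)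
              have hb2 : t * n < ((⌊x⌋₊ : ℝ) + 1) * T := (div_lt_iff₀ hT0).1 (by rwa [hxdef] at h2)
              rw [abs_le]
              constructor
              · have hlo : (⌊x⌋₊ : ℝ) * T / n ≤ t := by
                  rw [div_le_iff₀ hn0]; linarith
                have hTn : (0:ℝ) ≤ T / n := by positivity
                linarith
              · rw [sub_le_iff_le_add]
                have hhi : t ≤ ((⌊x⌋₊ : ℝ) + 1) * T / n := by
                  rw [le_div_iff₀ hn0]; linarith
                calc t ≤ ((⌊x⌋₊ : ℝ) + 1) * T / n := hhi
                  _ = T / n + (⌊x⌋₊ : ℝ) * T / n := by ring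
          · have hxeq : x = n := le_antisymm hxn (not_lt.1 hlt)
            have htn : t * n = (n : ℝ) * T := by
              have := (div_eq_iff hT0.ne').1 (hxdef ▸ hxeq)
              linarith
            have htT : t = T := by
              apply mul_right_cancel₀ hn0.ne'
              linarith
            refine ⟨m, by omega, ?_⟩
            have hcast : ((m : ℝ)) = (n : ℝ) - 1 := by
              rw [hn_def]; push_cast; ring
            rw [htT, hcast]
            have he : T - ((n : ℝ) - 1) * T / n = T / n := by
              field_simp
              ring
            rw [he, abs_of_nonneg (by positivity)]
      obtain ⟨i, hin, hti⟩ := hidx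
      have hdist : dist (c i) (f t) ≤ h := by
        rw [hc, dist_comm, dist_eq_norm]
        calc ‖f t - f (i * T / n)‖ ≤ K * |t - i * T / n| :=
              hf (i * T / n) (hgrid i hin.le) t ht
          _ ≤ K * (T / n) := mul_le_mul_of_nonneg_left hti hK
          _ = h := by rw [hh]; ring
      have hsub : closedBall (f t) r ⊆ B i := by
        apply closedBall_subset_closedBall'
        rw [dist_comm]
        rw [hρ]; linarith
      exact fun p hp => Set.mem_biUnion (Finset.mem_range.mpr hin) (hsub hp)
    -- measure estimate
    have hlune : ∀ i ∈ Finset.range m, volume (B (i + 1) \ B i) ≤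
        ENNReal.ofReal (2 * ρ * h) := by
      intro i hi
      rw [Finset.mem_range] at hi
      have hdist : dist (c (i + 1)) (c i) ≤ h := by
        rw [hc, dist_eq_norm]
        calc ‖f ((i + 1 : ℕ) * T / n) - f (i * T / n)‖
            ≤ K * |(i + 1 : ℕ) * T / n - i * T / n| :=
              hf (i * T / n) (hgrid i (by omega)) ((i + 1 : ℕ) * T / n) (hgrid (i + 1) (by omega))
          _ = K * (T / n) := by
              rw [show ((i + 1 : ℕ) : ℝ) * T / n - (i : ℝ) * T / n = T / n by push_cast; ring,
                abs_of_nonneg (by positivity)]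
          _ = h := by rw [hh]; ring
      calc volume (B (i + 1) \ B i) ≤ ENNReal.ofReal (2 * ρ * dist (c (i + 1)) (c i)) :=
            lune _ _ _ hρ0
        _ ≤ ENNReal.ofReal (2 * ρ * h) := by
            apply ENNReal.ofReal_le_ofReal
            apply mul_le_mul_of_nonneg_left hdist (by positivity)
    calc volume (Metric.cthickening r S)
        ≤ volume (⋃ i ∈ Finset.range (m + 1), B i) := measure_mono hcover
      _ ≤ volume (B 0 ∪ ⋃ i ∈ Finset.range m, (B (i + 1) \ B i)) :=
          measure_mono (union_sub B m)
      _ ≤ volume (B 0) + volume (⋃ i ∈ Finset.range m, (B (i + 1) \ B i)) :=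
          measure_union_le _ _
      _ ≤ volume (B 0) + ∑ i ∈ Finset.range m, volume (B (i + 1) \ B i) := by
          gcongr
          exact measure_biUnion_finset_le _ _
      _ ≤ ENNReal.ofReal (Real.pi * ρ ^ 2) + ∑ i ∈ Finset.range m, ENNReal.ofReal (2 * ρ * h) := by
          apply add_le_add
          · exact le_of_eq (vol_cb2 _ _ hρ0)
          · exact Finset.sum_le_sum hlune
      _ = ENNReal.ofReal (Real.pi * ρ ^ 2) + ENNReal.ofReal ((m : ℝ) * (2 * ρ * h)) := by
          rw [Finset.sum_const, Finset.card_range, nsmul_eq_mul,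
            ← ENNReal.ofReal_natCast m, ← ENNReal.ofReal_mul (by positivity)]
      _ ≤ ENNReal.ofReal (Real.pi * ρ ^ 2 + 2 * ρ * (K * T)) := by
          rw [ENNReal.ofReal_add (by positivity) (by positivity)]
          apply add_le_add_right
          apply ENNReal.ofReal_le_ofReal
          have hmn : (m : ℝ) ≤ n := by exact_mod_cast Nat.le_succ m
          have : (m : ℝ) * h ≤ K * T := by nlinarith
          nlinarith
  -- pass to the limit
  have hlim : Tendsto (fun n : ℕ =>
      ENNReal.ofReal (Real.pi * (r + K * T / n) ^ 2 + 2 * (r + K * T / n) * (K * T))) atTop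
      (𝓝 (ENNReal.ofReal (Real.pi * r ^ 2 + 2 * r * (K * T)))) := by
    have h0 : Tendsto (fun n : ℕ => K * T / n) atTop (𝓝 0) :=
      tendsto_const_div_atTop_nhds_zero_nat _
    have hcont2 : Continuous fun a : ℝ =>
        ENNReal.ofReal (Real.pi * (r + a) ^ 2 + 2 * (r + a) * (K * T)) := by
      apply ENNReal.continuous_ofReal.comp
      continuity
    have := (hcont2.tendsto 0).comp h0
    simp only [add_zero] at this; exact this
  have hfinal : volume (Metric.cthickening r S) ≤
      ENNReal.ofReal (Real.pi * r ^ 2 + 2 * r * (K * T)) :=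
    ge_of_tendsto hlim (eventually_atTop.2 ⟨1, fun n hn => key n hn⟩)
  have heq : 2 * r * K * T + Real.pi * r ^ 2 = Real.pi * r ^ 2 + 2 * r * (K * T) := by ring
  rw [heq]
  exact hfinal
end
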